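/- For an integrable random variable W with continuous strictly increasing CDF and any α ∈ (0,1), the expected shortfall ES_α = (1/α) E[W · 1_{W ≤ W*_α}], where W*_α is the α-quantile of W, satisfies ES_α = sup_{w ∈ ℝ} ( w + (1/α) E[min(W - w, 0)] ), and the supremum is attained at w = W*_α. -/

import Mathlib

open Real MeasureTheory Set

/-- Rockafellar–Uryasev representation: for an integrable random variable `W` with
continuous strictly increasing CDF and `α ∈ (0,1)`, the expected shortfall
`ES_α = (1/α) E[W · 1_{W ≤ W*_α}]`, where `W*_α` is the `α`-quantile, satisfies
`ES_α = sup_w (w + (1/α) E[min (W - w) 0])`, with the supremum attained at `w = W*_α`. -/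
theorem expected_shortfall_rockafellar_uryasev
    {Ω : Type*} [MeasurableSpace Ω] (μ : Measure Ω) [IsProbabilityMeasure μ]
    (W : Ω → ℝ) (hW : Integrable W μ) (α : ℝ) (hα0 : 0 < α) (hα1 : α < 1)
    (hcdf_cont : Continuous fun x : ℝ => (μ {ω | W ω ≤ x}).toReal)
    (hcdf_mono : StrictMono fun x : ℝ => (μ {ω | W ω ≤ x}).toReal)
    (q : ℝ) (hq : (μ {ω | W ω ≤ q}).toReal = α) :
    (∀ w : ℝ,
      w + (1 / α) * ∫ ω, min (W ω - w) 0 ∂μ ≤ (1 / α) * ∫ ω in {ω | W ω ≤ q}, W ω ∂μ) ∧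
    q + (1 / α) * ∫ ω, min (W ω - q) 0 ∂μ = (1 / α) * ∫ ω in {ω | W ω ≤ q}, W ω ∂μ := by
  have hαne : α ≠ 0 := ne_of_gt hα0
  -- measurable version of W
  obtain ⟨g, hg_meas, hWg⟩ := hW.aemeasurable
  set s : Set Ω := {ω | W ω ≤ q} with hs_def
  set t : Set Ω := {ω | g ω ≤ q} with ht_def
  have ht_meas : MeasurableSet t := hg_meas (measurableSet_Iic (a := q))
  have hst : s =ᵐ[μ] t := by
    filter_upwards [hWg] with ω h
    show (W ω ≤ q) = (g ω ≤ q)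
    rw [h]
  have hrestrict : μ.restrict s = μ.restrict t := Measure.restrict_congr_set hst
  have hμt : (μ t).toReal = α := by
    rw [← measure_congr hst, hq]
  -- integrability of min (W - w) 0 for each w
  have hmin : ∀ w : ℝ, Integrable (fun ω => min (W ω - w) 0) μ := by
    intro w
    have h1 : Integrable (fun ω => W ω - w) μ := hW.sub (integrable_const w)
    have h2 : Integrable (fun ω => |W ω - w|) μ := h1.abs
    have : (fun ω => min (W ω - w) 0) = fun ω => ((W ω - w) - |W ω - w|) / 2 := by
      funext ω
      rcases le_total (W ω - w) 0 with h | h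
      · rw [min_eq_left h, abs_of_nonpos h]; ring
      · rw [min_eq_right h, abs_of_nonneg h]; ring
    rw [this]
    exact (h1.sub h2).div_const 2
  -- the value of the integral at q
  have hkey : ∫ ω, min (W ω - q) 0 ∂μ = (∫ ω in s, W ω ∂μ) - q * α := by
    have heq : ∀ᵐ ω ∂μ, min (W ω - q) 0 = t.indicator (fun ω => W ω - q) ω := by
      filter_upwards [hWg] with ω h
      by_cases hω : ω ∈ t
      · rw [Set.indicator_of_mem hω]
        have : W ω - q ≤ 0 := by
          have := hω; rw [ht_def, Set.mem_setOf_eq] at this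
          rw [h]; linarith
        exact min_eq_left this
      · rw [Set.indicator_of_notMem hω]
        have : 0 ≤ W ω - q := by
          have : ¬ g ω ≤ q := hω
          rw [h]; push_neg at this; linarith
        exact min_eq_right this
    rw [integral_congr_ae heq, integral_indicator ht_meas]
    have hWint : Integrable W (μ.restrict t) := hW.restrict
    rw [integral_sub hWint (integrable_const q), setIntegral_const]
    have : ∫ ω in s, W ω ∂μ = ∫ ω in t, W ω ∂μ := by rw [hrestrict]
    rw [this, measureReal_def, hμt, smul_eq_mul]
    ring
  -- equality part
  have heq : q + (1 / α) * ∫ ω, min (W ω - q) 0 ∂μ = (1 / α) * ∫ ω in s, W ω ∂μ := by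
    rw [hkey]; field_simp; ring
  refine ⟨fun w => ?_, heq⟩
  -- inequality part
  have hptwise : ∀ᵐ ω ∂μ, (w - q) * t.indicator (fun _ => (1 : ℝ)) ω ≤
      min (W ω - q) 0 - min (W ω - w) 0 := by
    filter_upwards [hWg] with ω h
    by_cases hω : ω ∈ t
    · rw [Set.indicator_of_mem hω]
      have hx : W ω ≤ q := by
        have : g ω ≤ q := hω
        rw [h]; exact this
      have h1 : min (W ω - q) 0 = W ω - q := min_eq_left (by linarith)
      have h2 : min (W ω - w) 0 ≤ W ω - w := min_le_left _ _
      rw [h1]; linarith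
    · rw [Set.indicator_of_notMem hω]
      have hx : q < W ω := by
        have : ¬ g ω ≤ q := hω
        rw [h]; push_neg at this; exact this
      have h1 : min (W ω - q) 0 = 0 := min_eq_right (by linarith)
      have h2 : min (W ω - w) 0 ≤ 0 := min_le_right _ _
      rw [h1]; linarith
  have hind : Integrable (fun ω => (w - q) * t.indicator (fun _ => (1 : ℝ)) ω) μ := by
    refine Integrable.const_mul ?_ _
    exact (integrable_const (1 : ℝ)).indicator ht_meas
  have hint : ∫ ω, (w - q) * t.indicator (fun _ => (1 : ℝ)) ω ∂μ ≤
      ∫ ω, (min (W ω - q) 0 - min (W ω - w) 0) ∂μ :=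
    integral_mono_ae hind ((hmin q).sub (hmin w)) hptwise
  have hlhs : ∫ ω, (w - q) * t.indicator (fun _ => (1 : ℝ)) ω ∂μ = (w - q) * α := by
    rw [integral_const_mul, integral_indicator ht_meas, setIntegral_const, measureReal_def, hμt]
    simp
  rw [hlhs, integral_sub (hmin q) (hmin w)] at hint
  -- combine
  have hineq : w + (1 / α) * ∫ ω, min (W ω - w) 0 ∂μ ≤
      q + (1 / α) * ∫ ω, min (W ω - q) 0 ∂μ := by
    have h1 : (1 / α) * ((w - q) * α) ≤
        (1 / α) * ((∫ ω, min (W ω - q) 0 ∂μ) - ∫ ω, min (W ω - w) 0 ∂μ) :=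
      mul_le_mul_of_nonneg_left hint (by positivity)
    have h2 : (1 / α) * ((w - q) * α) = w - q := by field_simp
    rw [h2, mul_sub] at h1
    linarith
  calc w + (1 / α) * ∫ ω, min (W ω - w) 0 ∂μ
      ≤ q + (1 / α) * ∫ ω, min (W ω - q) 0 ∂μ := hineq
    _ = (1 / α) * ∫ ω in s, W ω ∂μ := heq
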